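/- Let F₁, …, F_T ∈ ℝ^d with ‖F_t‖ ≤ L₀, ε > 0, and define A_t = ε I_d + Σ_{s=1}^t F_s F_sᵀ. Then Σ_{t=1}^T F_tᵀ A_t⁻¹ F_t ≤ d ln(1 + T L₀²/ε). -/

import Mathlib

open Matrix Finset

private lemma lgdet_quad {d : ℕ} (u x : Fin d → ℝ) :
    x ⬝ᵥ (vecMulVec u u *ᵥ x) = (u ⬝ᵥ x) ^ 2 := by
  simp only [vecMulVec_eq Unit, ← mulVec_mulVec, dotProduct_mulVec, sq]
  simp [mulVec, vecMul, dotProduct, Finset.sum_mul, Finset.mul_sum, mul_comm, mul_left_comm]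

private lemma lgdet_psd {d : ℕ} (u : Fin d → ℝ) : (vecMulVec u u).PosSemidef := by
  refine posSemidef_iff_dotProduct_mulVec.mpr ⟨by ext i j; simp [vecMulVec, mul_comm, IsHermitian], fun x => ?_⟩
  have h := lgdet_quad u x
  simp only [star_trivial]
  rw [h]
  exact sq_nonneg _

private lemma lgdet_mulVec_sum {d : ℕ} {ι : Type} (s : Finset ι)
    (N : ι → Matrix (Fin d) (Fin d) ℝ) (x : Fin d → ℝ) :
    (∑ j ∈ s, N j) *ᵥ x = ∑ j ∈ s, N j *ᵥ x := by
  induction s using Finset.cons_induction with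
  | empty => simp
  | cons a s ha ih => simp [Finset.sum_cons, add_mulVec, ih]

private lemma lgdet_dot_sum {d : ℕ} {ι : Type} (s : Finset ι)
    (w : ι → Fin d → ℝ) (v : Fin d → ℝ) :
    v ⬝ᵥ (∑ j ∈ s, w j) = ∑ j ∈ s, v ⬝ᵥ w j := by
  induction s using Finset.cons_induction with
  | empty => simp
  | cons a s ha ih => simp [Finset.sum_cons, dotProduct_add, ih]

private lemma lgdet_det_sub {d : ℕ} (u : Fin d → ℝ) (C : Matrix (Fin d) (Fin d) ℝ)
    (hC : IsUnit C.det) :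
    (C - vecMulVec u u).det = C.det * (1 - u ⬝ᵥ C⁻¹ *ᵥ u) := by
  have h1 : C - vecMulVec u u = C + replicateCol Unit (-u) * replicateRow Unit u := by
    rw [vecMulVec_eq Unit]
    ext i j
    simp [sub_eq_add_neg, Matrix.mul_apply]
  rw [h1, det_add_replicateCol_mul_replicateRow hC]
  congr 1
  rw [det_unique]
  simp [Matrix.mul_apply, dotProduct, mulVec, Finset.mul_sum, Finset.sum_mul, mul_comm,
    mul_left_comm, sub_eq_add_neg]
  rw [Finset.sum_comm]
  exact Finset.sum_congr rfl fun x _ => Finset.sum_congr rfl fun y _ => by ring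

/-- the log-determinant potential bound
`∑_{t=1}^T Fₜᵀ Aₜ⁻¹ Fₜ ≤ d ln(1 + T L₀²/ε)` for `Aₜ = ε I + ∑_{s=1}^t Fₛ Fₛᵀ`. -/
theorem log_det_potential_bound {d : ℕ} (T : ℕ)
    (F : ℕ → Fin d → ℝ) (L₀ ε : ℝ) (hL₀ : 0 ≤ L₀) (hε : 0 < ε)
    (hF : ∀ t, F t ⬝ᵥ F t ≤ L₀ ^ 2)
    (A : ℕ → Matrix (Fin d) (Fin d) ℝ)
    (hA : ∀ t, A t = ε • (1 : Matrix (Fin d) (Fin d) ℝ) +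
      ∑ s ∈ Finset.Icc 1 t, vecMulVec (F s) (F s)) :
    ∑ t ∈ Finset.Icc 1 T, F t ⬝ᵥ ((A t)⁻¹ *ᵥ F t) ≤
      d * Real.log (1 + T * L₀ ^ 2 / ε) := by
  -- positivity facts
  have hPD : ∀ t, (A t).PosDef := by
    intro t
    rw [hA t]
    have h1 : (ε • (1 : Matrix (Fin d) (Fin d) ℝ)).PosDef := by
      rw [smul_one_eq_diagonal]
      exact posDef_diagonal_iff.mpr fun _ => hε
    refine h1.add_posSemidef ?_
    induction (Finset.Icc 1 t) using Finset.cons_induction with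
    | empty => simpa using Matrix.PosSemidef.zero
    | cons a s ha ih => rw [Finset.sum_cons]; exact (lgdet_psd (F a)).add ih
  have hdetpos : ∀ t, 0 < (A t).det := fun t => (hPD t).det_pos
  set g : ℕ → ℝ := fun t => Real.log ((A t).det) with hg
  -- per-step bound
  have hstep : ∀ i : ℕ, F (i + 1) ⬝ᵥ ((A (i + 1))⁻¹ *ᵥ F (i + 1)) ≤ g (i + 1) - g i := by
    intro i
    have hrel : A i = A (i + 1) - vecMulVec (F (i + 1)) (F (i + 1)) := by
      rw [hA i, hA (i + 1), Finset.sum_Icc_succ_top (Nat.le_add_left 1 i)]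
      abel
    have hdet : (A i).det = (A (i + 1)).det *
        (1 - F (i + 1) ⬝ᵥ (A (i + 1))⁻¹ *ᵥ F (i + 1)) := by
      rw [hrel]
      exact lgdet_det_sub _ _ (hdetpos (i + 1)).ne'.isUnit
    set x := F (i + 1) ⬝ᵥ (A (i + 1))⁻¹ *ᵥ F (i + 1) with hx
    set r := (A i).det / (A (i + 1)).det with hr
    have hrpos : 0 < r := div_pos (hdetpos i) (hdetpos (i + 1))
    have hxr : x = 1 - r := by
      rw [hr, hdet, mul_comm, mul_div_assoc, div_self (hdetpos (i + 1)).ne', mul_one]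
      ring
    have hgr : g (i + 1) - g i = -Real.log r := by
      rw [hg, hr, Real.log_div (hdetpos i).ne' (hdetpos (i + 1)).ne']
      ring
    have hlog := Real.log_le_sub_one_of_pos hrpos
    rw [hxr, hgr]
    linarith
  -- telescope
  have htel : ∑ t ∈ Finset.Icc 1 T, F t ⬝ᵥ ((A t)⁻¹ *ᵥ F t) ≤ g T - g 0 := by
    rw [← Finset.Ico_add_one_right_eq_Icc, Finset.sum_Ico_eq_sum_range]
    simp only [Nat.add_sub_cancel]
    calc ∑ i ∈ Finset.range T, F (1 + i) ⬝ᵥ ((A (1 + i))⁻¹ *ᵥ F (1 + i))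
        ≤ ∑ i ∈ Finset.range T, (g (i + 1) - g i) := by
          apply Finset.sum_le_sum
          intro i _
          rw [add_comm 1 i]
          exact hstep i
      _ = g T - g 0 := Finset.sum_range_sub g T
  -- g 0 = d log ε
  have hg0 : g 0 = d * Real.log ε := by
    have : A 0 = ε • (1 : Matrix (Fin d) (Fin d) ℝ) := by rw [hA 0]; simp
    show Real.log (A 0).det = d * Real.log ε
    simp only [this, Matrix.det_smul, det_one, mul_one, Fintype.card_fin]
    rw [Real.log_pow]
  -- eigenvalue bound for A T
  have hbound : ε + T * L₀ ^ 2 > 0 := by positivity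
  have hgT : g T ≤ d * Real.log (ε + T * L₀ ^ 2) := by
    have hH := (hPD T).isHermitian
    have heigpos : ∀ i, 0 < hH.eigenvalues i := (hPD T).eigenvalues_pos
    have heigle : ∀ i, hH.eigenvalues i ≤ ε + T * L₀ ^ 2 := by
      intro i
      set v : Fin d → ℝ := ⇑(hH.eigenvectorBasis i) with hv
      have hnorm : v ⬝ᵥ v = 1 := by
        have h1 : ‖hH.eigenvectorBasis i‖ = 1 := hH.eigenvectorBasis.orthonormal.1 i
        have h2 := EuclideanSpace.norm_eq (hH.eigenvectorBasis i)
        rw [h1] at h2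
        have h3 := Real.sqrt_eq_one.mp h2.symm
        simpa [dotProduct, sq, Real.norm_eq_abs, abs_mul_abs_self] using h3
      have heig : hH.eigenvalues i = v ⬝ᵥ (A T *ᵥ v) := by
        simpa using hH.eigenvalues_eq i
      rw [heig, hA T]
      rw [add_mulVec, dotProduct_add, smul_mulVec, one_mulVec, dotProduct_smul]
      rw [lgdet_mulVec_sum, lgdet_dot_sum]
      have hsum : ∑ s ∈ Finset.Icc 1 T, v ⬝ᵥ (vecMulVec (F s) (F s) *ᵥ v)
          = ∑ s ∈ Finset.Icc 1 T, (F s ⬝ᵥ v) ^ 2 :=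
        Finset.sum_congr rfl fun s _ => lgdet_quad _ _
      rw [hsum, hnorm]
      simp only [smul_eq_mul, mul_one]
      gcongr
      calc ∑ s ∈ Finset.Icc 1 T, (F s ⬝ᵥ v) ^ 2 ≤ ∑ s ∈ Finset.Icc 1 T, L₀ ^ 2 := by
            apply Finset.sum_le_sum
            intro s _
            calc (F s ⬝ᵥ v) ^ 2 ≤ (F s ⬝ᵥ F s) * (v ⬝ᵥ v) := by
                  simpa [dotProduct, sq] using Finset.sum_mul_sq_le_sq_mul_sq Finset.univ (F s) v
              _ ≤ L₀ ^ 2 := by rw [hnorm, mul_one]; exact hF s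
        _ = T * L₀ ^ 2 := by simp [Finset.sum_const, Nat.card_Icc]
    have hdetT : (A T).det = ∏ i, hH.eigenvalues i := by
      simpa using hH.det_eq_prod_eigenvalues
    show Real.log (A T).det ≤ d * Real.log (ε + T * L₀ ^ 2)
    rw [hdetT, Real.log_prod fun i _ => (heigpos i).ne']
    calc ∑ i, Real.log (hH.eigenvalues i) ≤ ∑ _i : Fin d, Real.log (ε + T * L₀ ^ 2) := by
          apply Finset.sum_le_sum
          intro i _
          exact Real.log_le_log (heigpos i) (heigle i)
      _ = d * Real.log (ε + T * L₀ ^ 2) := by simp [Finset.sum_const]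
  -- conclude
  have hfinal : (d : ℝ) * Real.log (ε + T * L₀ ^ 2) - d * Real.log ε
      = d * Real.log (1 + T * L₀ ^ 2 / ε) := by
    rw [← mul_sub, ← Real.log_div hbound.ne' hε.ne']
    congr 2
    field_simp
  calc ∑ t ∈ Finset.Icc 1 T, F t ⬝ᵥ ((A t)⁻¹ *ᵥ F t) ≤ g T - g 0 := htel
    _ ≤ d * Real.log (ε + T * L₀ ^ 2) - d * Real.log ε := by rw [hg0]; linarith [hgT]
    _ = d * Real.log (1 + T * L₀ ^ 2 / ε) := hfinal
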